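/- Let 1/2 ≤ t < 1 and let Q ⊂ ℝⁿ be a cube. Then for every measurable function f, m_{|f − m_f(t,Q)|}(1 − (1−t)/2ⁿ, Q) ≤ 2 · inf_{c ∈ ℝ} m_{|f − c|}(1 − (1−t)/2ⁿ, Q). -/

import Mathlib

open MeasureTheory ENNReal

namespace LocalMedian

/-- Euclidean space `ℝⁿ`. -/
abbrev Sp (n : ℕ) := EuclideanSpace ℝ (Fin n)

/-- An axis-parallel cube in `ℝⁿ`, given by its lower corner and (positive) sidelength. -/
structure Cube (n : ℕ) where
  corner : Sp n
  side : ℝ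
  side_pos : 0 < side

namespace Cube

variable {n : ℕ}

/-- The set of points of the cube. -/
def set (Q : Cube n) : Set (Sp n) :=
  {x | ∀ i, Q.corner i ≤ x i ∧ x i ≤ Q.corner i + Q.side}

/-- The center of the cube. -/
noncomputable def center (Q : Cube n) : Sp n := WithLp.toLp 2 (fun i => Q.corner i + Q.side / 2)

/-- The cube concentric with `Q` whose sidelength is `r` times that of `Q`. -/
noncomputable def dilate (Q : Cube n) (r : ℝ) (hr : 0 < r) : Cube n where
  corner := WithLp.toLp 2 (fun i => Q.center i - r * Q.side / 2)
  side := r * Q.side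
  side_pos := mul_pos hr Q.side_pos

/-- `Q` is a dyadic subcube of `Q₀`, i.e. obtained from `Q₀` by repeated dyadic
subdivision into `2ⁿ` congruent subcubes. -/
def dyadicSub (Q₀ Q : Cube n) : Prop :=
  ∃ (k : ℕ) (m : Fin n → ℕ), (∀ i, m i < 2 ^ k) ∧
    Q.side = Q₀.side / 2 ^ k ∧ ∀ i, Q.corner i = Q₀.corner i + Q.side * m i

/-- `Q` is one of the `2ⁿ` dyadic children of `P` (so `P` is the dyadic parent of `Q`). -/
def isDyadicChild (Q P : Cube n) : Prop :=
  Q.side = P.side / 2 ∧ ∃ m : Fin n → ℕ, (∀ i, m i < 2) ∧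
    ∀ i, Q.corner i = P.corner i + Q.side * m i

end Cube

variable {n : ℕ}

/-- The (maximal) median of `f` over the cube `Q` with parameter `t`:
`m_f(t,Q) = sup { M : |{y ∈ Q : f y < M}| ≤ t|Q| }`. -/
noncomputable def median (f : Sp n → ℝ) (t : ℝ) (Q : Cube n) : ℝ :=
  sSup {M : ℝ | volume {y ∈ Q.set | f y < M} ≤ ENNReal.ofReal t * volume Q.set}

/-- The local oscillation `inf_c inf {α ≥ 0 : |{y ∈ Q : |f y - c| > α}| < s|Q|}`. -/
noncomputable def osc (f : Sp n → ℝ) (s : ℝ) (Q : Cube n) : ℝ :=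
  ⨅ c : ℝ, sInf {α : ℝ | 0 ≤ α ∧
    volume {y ∈ Q.set | α < |f y - c|} < ENNReal.ofReal s * volume Q.set}

/-- The local sharp maximal function `M♯_{0,s,Q₀} f`, restricted to the cube `Q₀`. -/
noncomputable def sharpLoc (f : Sp n → ℝ) (s : ℝ) (Q₀ : Cube n) (x : Sp n) : ℝ≥0∞ :=
  ⨆ Q : {Q : Cube n // x ∈ Q.set ∧ Q.set ⊆ Q₀.set}, ENNReal.ofReal (osc f s Q.1)

/-- The local sharp maximal function `M♯_{0,s} f` (over all cubes containing `x`). -/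
noncomputable def sharp (f : Sp n → ℝ) (s : ℝ) (x : Sp n) : ℝ≥0∞ :=
  ⨆ Q : {Q : Cube n // x ∈ Q.set}, ENNReal.ofReal (osc f s Q.1)

/-- The Hardy–Littlewood maximal function (over cubes containing `x`). -/
noncomputable def maximal (f : Sp n → ℝ) (x : Sp n) : ℝ≥0∞ :=
  ⨆ Q : {Q : Cube n // x ∈ Q.set},
    (∫⁻ y in Q.1.set, ENNReal.ofReal |f y|) / volume Q.1.set

/-- The Hardy–Littlewood maximal function of an `ℝ≥0∞`-valued function. -/
noncomputable def maximalE (g : Sp n → ℝ≥0∞) (x : Sp n) : ℝ≥0∞ :=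
  ⨆ Q : {Q : Cube n // x ∈ Q.set}, (∫⁻ y in Q.1.set, g y) / volume Q.1.set

/-- The average `(1/|Q|) ∫_Q g`. -/
noncomputable def cubeAvg (g : Sp n → ℝ) (Q : Cube n) : ℝ :=
  (volume Q.set).toReal⁻¹ * ∫ y in Q.set, g y

/-- The Fefferman–Stein sharp maximal function
`M♯ g(x) = sup_{Q ∋ x} (1/|Q|) ∫_Q |g - g_Q|`. -/
noncomputable def fsSharp (g : Sp n → ℝ) (x : Sp n) : ℝ≥0∞ :=
  ⨆ Q : {Q : Cube n // x ∈ Q.set},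
    ENNReal.ofReal (cubeAvg (fun y => |g y - cubeAvg g Q.1|) Q.1)


section Aux

variable {n : ℕ}

lemma Cube.set_eq (Q : Cube n) :
    Q.set = ((MeasurableEquiv.toLp 2 (Fin n → ℝ)).symm) ⁻¹'
      (Set.univ.pi fun i => Set.Icc (Q.corner i) (Q.corner i + Q.side)) := by
  ext x
  simp [Cube.set, MeasurableEquiv.coe_toLp_symm, Pi.le_def, forall_and]

lemma Cube.measurableSet_set (Q : Cube n) : MeasurableSet Q.set := by
  rw [Cube.set_eq]
  exact ((MeasurableEquiv.toLp 2 (Fin n → ℝ)).symm).measurable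
    (MeasurableSet.univ_pi fun i => measurableSet_Icc)

lemma Cube.volume_set (Q : Cube n) :
    volume Q.set = ENNReal.ofReal Q.side ^ n := by
  rw [Cube.set_eq,
    (EuclideanSpace.volume_preserving_symm_measurableEquiv_toLp (Fin n)).measure_preimage
      (MeasurableSet.univ_pi fun i => measurableSet_Icc).nullMeasurableSet,
    volume_pi_pi]
  simp [Real.volume_Icc]

lemma Cube.volume_set_ne_zero (Q : Cube n) : volume Q.set ≠ 0 := by
  rw [Cube.volume_set]
  exact pow_ne_zero _ (by simp [ENNReal.ofReal_eq_zero, not_le, Q.side_pos])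

lemma Cube.volume_set_ne_top (Q : Cube n) : volume Q.set ≠ ∞ := by
  rw [Cube.volume_set]
  exact pow_ne_top ofReal_ne_top

lemma measurableSet_cut (Q : Cube n) {g : Sp n → ℝ} (hg : Measurable g) (M : ℝ) :
    MeasurableSet {y ∈ Q.set | g y < M} :=
  Q.measurableSet_set.inter (hg measurableSet_Iio)

/-- The defining set of the median is nonempty. -/
lemma medianSet_nonempty (Q : Cube n) {g : Sp n → ℝ} (hg : Measurable g) {s : ℝ}
    (hs : 0 < s) :
    {M : ℝ | volume {y ∈ Q.set | g y < M} ≤ ENNReal.ofReal s * volume Q.set}.Nonempty := by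
  have hpos : 0 < ENNReal.ofReal s * volume Q.set :=
    ENNReal.mul_pos (by simp [ENNReal.ofReal_pos, hs]) Q.volume_set_ne_zero
  have hA : ∀ k : ℕ, NullMeasurableSet {y ∈ Q.set | g y < -(k : ℝ)} volume := fun k =>
    (measurableSet_cut Q hg _).nullMeasurableSet
  have hanti : Antitone fun k : ℕ => {y ∈ Q.set | g y < -(k : ℝ)} := by
    intro a b hab x hx
    exact ⟨hx.1, lt_of_lt_of_le hx.2 (by simpa using (Nat.cast_le (α := ℝ)).mpr hab)⟩
  have hfin : ∃ k : ℕ, volume {y ∈ Q.set | g y < -(k : ℝ)} ≠ ∞ :=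
    ⟨0, ne_top_of_le_ne_top Q.volume_set_ne_top (measure_mono fun x hx => hx.1)⟩
  have hI : (⋂ k : ℕ, {y ∈ Q.set | g y < -(k : ℝ)}) = ∅ := by
    ext x
    simp only [Set.mem_iInter, Set.mem_setOf_eq, Set.mem_empty_iff_false, iff_false, not_forall]
    obtain ⟨k, hk⟩ := exists_nat_gt (-(g x))
    exact ⟨k, fun h => absurd h.2 (by push_neg; linarith)⟩
  have htend := tendsto_measure_iInter_atTop (μ := volume) hA hanti hfin
  rw [hI, measure_empty] at htend
  have := htend.eventually (eventually_lt_nhds hpos)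
  obtain ⟨k, hk⟩ := this.exists
  exact ⟨-(k : ℝ), le_of_lt hk⟩

/-- There is a level above which the cut has measure `> s|Q|`; hence the defining
set of the median is bounded above. -/
lemma medianSet_bddAbove (Q : Cube n) {g : Sp n → ℝ} (hg : Measurable g) {s : ℝ}
    (hs : s < 1) :
    BddAbove {M : ℝ | volume {y ∈ Q.set | g y < M} ≤ ENNReal.ofReal s * volume Q.set} := by
  have hlt : ENNReal.ofReal s * volume Q.set < volume Q.set := by
    rcases le_or_gt s 0 with h | h
    · simpa [ENNReal.ofReal_eq_zero.mpr h] using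
        (pos_iff_ne_zero.mpr Q.volume_set_ne_zero)
    · calc ENNReal.ofReal s * volume Q.set < 1 * volume Q.set := by
            refine ENNReal.mul_lt_mul_iff_left Q.volume_set_ne_zero Q.volume_set_ne_top |>.mpr ?_
            simpa using ENNReal.ofReal_lt_one.mpr hs
          _ = volume Q.set := one_mul _
  have hmono : Monotone fun k : ℕ => {y ∈ Q.set | g y < (k : ℝ)} := by
    intro a b hab x hx
    exact ⟨hx.1, lt_of_lt_of_le hx.2 (Nat.cast_le.mpr hab)⟩
  have hU : (⋃ k : ℕ, {y ∈ Q.set | g y < (k : ℝ)}) = Q.set := by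
    ext x
    simp only [Set.mem_iUnion, Set.mem_setOf_eq]
    constructor
    · rintro ⟨k, hk, _⟩; exact hk
    · intro hx
      obtain ⟨k, hk⟩ := exists_nat_gt (g x)
      exact ⟨k, hx, hk⟩
  have htend := tendsto_measure_iUnion_atTop (μ := volume) hmono
  rw [hU] at htend
  obtain ⟨k, hk⟩ := (htend.eventually (eventually_gt_nhds hlt)).exists
  refine ⟨(k : ℝ), fun M hM => ?_⟩
  by_contra hMk
  push_neg at hMk
  have : volume {y ∈ Q.set | g y < (k : ℝ)} ≤ volume {y ∈ Q.set | g y < M} :=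
    measure_mono fun x hx => ⟨hx.1, hx.2.trans hMk⟩
  exact absurd (this.trans hM) (not_le.mpr hk)

lemma le_median (Q : Cube n) {g : Sp n → ℝ} (hg : Measurable g) {s M : ℝ}
    (hs : s < 1)
    (hM : volume {y ∈ Q.set | g y < M} ≤ ENNReal.ofReal s * volume Q.set) :
    M ≤ median g s Q :=
  le_csSup (medianSet_bddAbove Q hg hs) hM

lemma lt_volume_of_median_lt (Q : Cube n) {g : Sp n → ℝ} (hg : Measurable g) {s M : ℝ}
    (hs : s < 1) (hM : median g s Q < M) :
    ENNReal.ofReal s * volume Q.set < volume {y ∈ Q.set | g y < M} := by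
  by_contra h
  push_neg at h
  exact absurd (le_median Q hg hs h) (not_le.mpr hM)

lemma median_le (Q : Cube n) {g : Sp n → ℝ} (hg : Measurable g) {s b : ℝ}
    (hs : 0 < s)
    (h : ∀ M, volume {y ∈ Q.set | g y < M} ≤ ENNReal.ofReal s * volume Q.set → M ≤ b) :
    median g s Q ≤ b :=
  csSup_le (medianSet_nonempty Q hg hs) h

lemma median_nonneg (Q : Cube n) {g : Sp n → ℝ} (hg : Measurable g) {s : ℝ}
    (hs0 : 0 < s) (hs1 : s < 1) (hgpos : ∀ y, 0 ≤ g y) :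
    0 ≤ median g s Q := by
  refine le_median Q hg hs1 ?_
  have : {y ∈ Q.set | g y < 0} = ∅ := by
    ext y
    simp only [Set.mem_setOf_eq, Set.mem_empty_iff_false, iff_false, not_and, not_lt]
    exact fun _ => hgpos y
  simp [this]

end Aux

/-- Let `1/2 ≤ t < 1` and let `Q ⊂ ℝⁿ` be a cube. Then for every
measurable `f`:
`m_{|f − m_f(t,Q)|}(1 − (1−t)/2ⁿ, Q) ≤ 2 inf_{c ∈ ℝ} m_{|f − c|}(1 − (1−t)/2ⁿ, Q)`. -/
theorem statement15 {n : ℕ} (t : ℝ) (ht0 : 1 / 2 ≤ t) (ht1 : t < 1)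
    (Q : Cube n) (f : Sp n → ℝ) (hf : Measurable f) :
    median (fun y => |f y - median f t Q|) (1 - (1 - t) / 2 ^ n) Q
      ≤ 2 * ⨅ c : ℝ, median (fun y => |f y - c|) (1 - (1 - t) / 2 ^ n) Q := by
  set s : ℝ := 1 - (1 - t) / 2 ^ n with hs_def
  have h2n : (1 : ℝ) ≤ 2 ^ n := one_le_pow₀ one_le_two
  have h2n' : (0 : ℝ) < 2 ^ n := by linarith
  have hdiv : (1 - t) / 2 ^ n ≤ 1 - t := div_le_self (by linarith) h2n
  have hdivpos : 0 < (1 - t) / 2 ^ n := div_pos (by linarith) h2n'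
  have hst : t ≤ s := by simp only [hs_def]; linarith
  have hs0 : 0 < s := by linarith
  have hs1 : s < 1 := by simp only [hs_def]; linarith
  have h1s : 1 - s ≤ t := by simp only [hs_def]; linarith
  have ht : 0 < t := by linarith
  set M : ℝ := median f t Q with hM_def
  have hgM : Measurable fun y => |f y - M| := (hf.sub measurable_const).abs
  have key : ∀ c : ℝ, median (fun y => |f y - M|) s Q
      ≤ 2 * median (fun y => |f y - c|) s Q := by
    intro c
    have hgc : Measurable fun y => |f y - c| := (hf.sub measurable_const).abs
    set L : ℝ := median (fun y => |f y - c|) s Q with hL_def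
    have hLnn : 0 ≤ L := median_nonneg Q hgc hs0 hs1 fun y => abs_nonneg _
    -- upper bound : M ≤ c + L
    have hup : M ≤ c + L := by
      refine median_le Q hf ht fun M'' hM'' => ?_
      by_contra h''
      push_neg at h''
      have hβ : L < M'' - c := by linarith
      have hvol := lt_volume_of_median_lt Q hgc hs1 hβ
      have hsub : {y ∈ Q.set | |f y - c| < M'' - c} ⊆ {y ∈ Q.set | f y < M''} := by
        rintro y ⟨hy, hy2⟩
        exact ⟨hy, by have := abs_lt.mp hy2; linarith [this.2]⟩
      have hts : ENNReal.ofReal t * volume Q.set ≤ ENNReal.ofReal s * volume Q.set :=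
        mul_le_mul_left (ENNReal.ofReal_le_ofReal hst) _
      exact absurd (((hvol.trans_le (measure_mono hsub)).trans_le hM'')) (not_lt.mpr hts)
    -- lower bound : c - L ≤ M
    have hlow : c - L ≤ M := by
      refine le_of_forall_sub_le fun ε hε => ?_
      refine le_median Q hf ht1 ?_
      set A := {y ∈ Q.set | |f y - c| < L + ε} with hA_def
      have hAvol : ENNReal.ofReal s * volume Q.set < volume A :=
        lt_volume_of_median_lt Q hgc hs1 (by linarith)
      have hAmeas : MeasurableSet A := measurableSet_cut Q hgc _
      have hAsub : A ⊆ Q.set := fun y hy => hy.1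
      have hsub : {y ∈ Q.set | f y < c - L - ε} ⊆ Q.set \ A := by
        rintro y ⟨hy, hy2⟩
        refine ⟨hy, fun hyA => ?_⟩
        have h1 : c - f y ≤ |f y - c| := by
          rw [abs_sub_comm]; exact le_abs_self _
        have h2 : |f y - c| < L + ε := hyA.2
        linarith
      have hdiff : volume (Q.set \ A) = volume Q.set - volume A :=
        measure_diff hAsub hAmeas.nullMeasurableSet
          (ne_top_of_le_ne_top Q.volume_set_ne_top (measure_mono hAsub))
      have hfin : volume Q.set - ENNReal.ofReal s * volume Q.set
          ≤ ENNReal.ofReal t * volume Q.set := by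
        rw [tsub_le_iff_right]
        calc volume Q.set = 1 * volume Q.set := (one_mul _).symm
          _ ≤ ENNReal.ofReal (t + s) * volume Q.set :=
              mul_le_mul_left (ENNReal.one_le_ofReal.mpr (by linarith)) _
          _ = ENNReal.ofReal t * volume Q.set + ENNReal.ofReal s * volume Q.set := by
              rw [ENNReal.ofReal_add ht.le hs0.le, add_mul]
      calc volume {y ∈ Q.set | f y < c - L - ε} ≤ volume (Q.set \ A) :=
            measure_mono hsub
        _ = volume Q.set - volume A := hdiff
        _ ≤ volume Q.set - ENNReal.ofReal s * volume Q.set :=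
            tsub_le_tsub_left hAvol.le _
        _ ≤ ENNReal.ofReal t * volume Q.set := hfin
    have habs : |M - c| ≤ L := abs_le.mpr ⟨by linarith, by linarith⟩
    -- median of |f - M| is at most L + |M - c|
    have hmain : median (fun y => |f y - M|) s Q ≤ L + |M - c| := by
      refine median_le Q hgM hs0 fun M'' hM'' => ?_
      by_contra h''
      push_neg at h''
      have hβ : L < M'' - |M - c| := by linarith
      have hvol := lt_volume_of_median_lt Q hgc hs1 hβ
      have hsub : {y ∈ Q.set | |f y - c| < M'' - |M - c|}
          ⊆ {y ∈ Q.set | |f y - M| < M''} := by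
        rintro y ⟨hy, hy2⟩
        refine ⟨hy, ?_⟩
        have htri : |f y - M| ≤ |f y - c| + |c - M| := abs_sub_le _ _ _
        rw [abs_sub_comm c M] at htri
        linarith
      exact absurd ((hvol.trans_le (measure_mono hsub)).trans_le hM'')
        (lt_irrefl _)
    linarith
  have hinf : median (fun y => |f y - M|) s Q / 2
      ≤ ⨅ c : ℝ, median (fun y => |f y - c|) s Q :=
    le_ciInf fun c => by linarith [key c]
  linarith

end LocalMedian
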